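/- Let p ∈ [1,∞), let ρ : ℝ^N → ℝ be continuous and strictly positive with ∫_{ℝ^N} ρ(x) dx = 1, and suppose K > 0 satisfies sup{ρ(x) : |x−y| ≤ 1} ≤ K ρ(y) for every y ∈ ℝ^N. Let φ : ℝ^N → ℝ be measurable, integrable, and supported in the closed unit ball. Then for every u ∈ L^p(ℝ^N, ρ) one has ‖φ*u‖_{L^p(ℝ^N,ρ)} ≤ K^{1/p} ‖φ‖_{L^1(ℝ^N)} ‖u‖_{L^p(ℝ^N,ρ)}. (In particular this applies to each partial derivative ∂_i J of a C¹ kernel J supported in the unit ball.) -/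

import Mathlib

open MeasureTheory Set
open scoped ENNReal

noncomputable section

abbrev Euc (N : ℕ) := EuclideanSpace ℝ (Fin N)

/-- Weighted `L^p` norm `(∫ ρ |u|^p)^{1/p}`. -/
def wnorm {N : ℕ} (p : ℝ) (ρ u : Euc N → ℝ) : ℝ :=
  (∫ x, ρ x * |u x| ^ p) ^ (1 / p)

/-- Convolution `(J*u)(x) = ∫ J(x-y) u(y) dy`. -/
def conv {N : ℕ} (J u : Euc N → ℝ) (x : Euc N) : ℝ :=
  ∫ y, J (x - y) * u y

lemma lint_sub_left {N : ℕ} (f : Euc N → ℝ≥0∞) (x : Euc N) :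
    ∫⁻ y, f (x - y) = ∫⁻ y, f y := by
  have h1 : ∫⁻ y, f (x - y) = ∫⁻ y, (fun z => f (-z)) (y - x) := by
    simp_rw [neg_sub]
  rw [h1, lintegral_sub_right_eq_self (fun z => f (-z)) x]
  calc ∫⁻ z, f (-z) = ∫⁻ z, f ((MeasurableEquiv.neg (Euc N)) z) := rfl
  _ = ∫⁻ z, f z ∂((volume : Measure (Euc N)).map (MeasurableEquiv.neg (Euc N))) :=
      (lintegral_map_equiv f (MeasurableEquiv.neg (Euc N))).symm
  _ = ∫⁻ z, f z := by
      rw [show ((volume : Measure (Euc N)).map (MeasurableEquiv.neg (Euc N))) = volume from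
        Measure.map_neg_eq_self _]

lemma holder_aux {α : Type*} [MeasurableSpace α] {μ : Measure α} {p : ℝ} (hp : 1 ≤ p)
    (f g : α → ℝ≥0∞) (hf : AEMeasurable f μ) (hg : AEMeasurable g μ) :
    (∫⁻ y, f y * g y ∂μ) ^ p ≤ (∫⁻ y, f y ∂μ) ^ (p - 1) * ∫⁻ y, f y * g y ^ p ∂μ := by
  rcases eq_or_lt_of_le hp with h1 | h1
  · rw [← h1]; simp [ENNReal.rpow_one]
  · have hpq : p.HolderConjugate p.conjExponent := Real.HolderConjugate.conjExponent h1
    set q := p.conjExponent with hq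
    have h0p : (0:ℝ) < p := lt_trans one_pos h1
    have h0q : (0:ℝ) < q := hpq.symm.pos
    have key : ∫⁻ y, f y * g y ∂μ ≤
        (∫⁻ y, f y ∂μ) ^ (1/q) * (∫⁻ y, f y * g y ^ p ∂μ) ^ (1/p) := by
      have H := ENNReal.lintegral_mul_le_Lp_mul_Lq μ hpq.symm
        (hf.pow_const (1/q)) ((hf.pow_const (1/p)).mul hg)
      have e1 : ∀ y, f y ^ (1/q) * (f y ^ (1/p) * g y) = f y * g y := by
        intro y
        rw [← mul_assoc, ← ENNReal.rpow_add_of_nonneg _ _ (by positivity) (by positivity)]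
        rw [show 1/q + 1/p = 1 by rw [one_div, one_div, add_comm]; exact hpq.inv_add_inv_eq_one,
          ENNReal.rpow_one]
      have e2 : ∀ y, (f y ^ (1/q)) ^ q = f y := by
        intro y
        rw [← ENNReal.rpow_mul, one_div, inv_mul_cancel₀ (ne_of_gt h0q), ENNReal.rpow_one]
      have e3 : ∀ y, (f y ^ (1/p) * g y) ^ p = f y * g y ^ p := by
        intro y
        rw [ENNReal.mul_rpow_of_nonneg _ _ h0p.le, ← ENNReal.rpow_mul, one_div,
          inv_mul_cancel₀ (ne_of_gt h0p), ENNReal.rpow_one]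
      simp only [Pi.mul_apply] at H
      simp_rw [e1, e2, e3] at H
      exact H
    have := ENNReal.rpow_le_rpow key h0p.le
    have hqp : 1/q * p = p - 1 := by
      have hqe : q = p/(p-1) := hpq.conjugate_eq
      rw [hqe, one_div_div, div_mul_cancel₀ _ (ne_of_gt h0p)]
    rwa [ENNReal.mul_rpow_of_nonneg _ _ h0p.le, ← ENNReal.rpow_mul, ← ENNReal.rpow_mul, hqp,
      one_div, inv_mul_cancel₀ (ne_of_gt h0p), ENNReal.rpow_one] at this

theorem stmt1 {N : ℕ} (p : ℝ) (hp : 1 ≤ p)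
    (ρ : Euc N → ℝ) (hρc : Continuous ρ) (hρpos : ∀ x, 0 < ρ x) (hρ1 : ∫ x, ρ x = 1)
    (K : ℝ) (hK : 0 < K) (hKρ : ∀ y x : Euc N, ‖x - y‖ ≤ 1 → ρ x ≤ K * ρ y)
    (φ : Euc N → ℝ) (hφm : Measurable φ) (hφi : Integrable φ)
    (hφsupp : ∀ x : Euc N, 1 < ‖x‖ → φ x = 0)
    (u : Euc N → ℝ) (hum : Measurable u)
    (hu : Integrable fun x => ρ x * |u x| ^ p) :
    wnorm p ρ (conv φ u) ≤ K ^ (1 / p) * (∫ x, |φ x|) * wnorm p ρ u := by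
  have hp0 : (0:ℝ) < p := lt_of_lt_of_le one_pos hp
  have hpne : p ≠ 0 := ne_of_gt hp0
  set R : Euc N → ℝ≥0∞ := fun x => ENNReal.ofReal (ρ x) with hRdef
  set U : Euc N → ℝ≥0∞ := fun x => ENNReal.ofReal |u x| with hUdef
  set Φe : Euc N → ℝ≥0∞ := fun x => ENNReal.ofReal |φ x| with hΦdef
  have hRm : Measurable R := ENNReal.measurable_ofReal.comp hρc.measurable
  have hRtop : ∀ x, R x ≠ ∞ := by
    intro x; simp only [hRdef]; exact ENNReal.ofReal_ne_top
  have hUtop : ∀ x, U x ≠ ∞ := by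
    intro x; simp only [hUdef]; exact ENNReal.ofReal_ne_top
  have hUm : Measurable U := ENNReal.measurable_ofReal.comp hum.abs
  have hΦem : Measurable Φe := ENNReal.measurable_ofReal.comp hφm.abs
  set T := ∫⁻ z, Φe z with hTdef
  set M := ∫⁻ y, R y * U y ^ p with hMdef
  -- abs/nnnorm conversions
  have habs : ∀ r : ℝ, ENNReal.ofReal |r| = (‖r‖₊ : ℝ≥0∞) := fun r =>
    (Real.enorm_eq_ofReal_abs r).symm
  -- finiteness of T and its toReal
  have hTfin : T ≠ ∞ := by
    rw [hTdef]
    simp_rw [hΦdef, habs]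
    exact ne_of_lt hφi.hasFiniteIntegral
  have hTtoReal : ∫ x, |φ x| = T.toReal := by
    rw [integral_eq_lintegral_of_nonneg_ae (ae_of_all _ fun x => abs_nonneg _)
      hφm.abs.aestronglyMeasurable]
  -- representation of ρ |u|^p
  have hMrepr : ∀ (v : Euc N → ℝ) (x : Euc N),
      ENNReal.ofReal (ρ x * |v x| ^ p) = R x * ENNReal.ofReal |v x| ^ p := fun v x => by
    rw [ENNReal.ofReal_mul (hρpos x).le, ENNReal.ofReal_rpow_of_nonneg (abs_nonneg _) hp0.le]
  have hupm : Measurable fun x => ρ x * |u x| ^ p :=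
    hρc.measurable.mul (hum.abs.pow_const p)
  have hMtoReal : ∫ x, ρ x * |u x| ^ p = M.toReal := by
    rw [integral_eq_lintegral_of_nonneg_ae
      (ae_of_all _ fun x =>
        mul_nonneg (hρpos x).le (Real.rpow_nonneg (abs_nonneg _) p))
      hupm.aestronglyMeasurable]
    simp_rw [hMrepr u]
    rfl
  have hMfin : M ≠ ∞ := by
    rw [hMdef]
    have : ∀ y, R y * U y ^ p = (‖ρ y * |u y| ^ p‖₊ : ℝ≥0∞) := by
      intro y
      rw [← hMrepr u y, ← habs,
        abs_of_nonneg (mul_nonneg (hρpos y).le (Real.rpow_nonneg (abs_nonneg _) p))]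
    simp_rw [this]
    exact ne_of_lt hu.hasFiniteIntegral
  -- measurability of conv
  have hconvsm : StronglyMeasurable (conv φ u) := by
    have hprod : StronglyMeasurable fun q : Euc N × Euc N => φ (q.1 - q.2) * u q.2 :=
      ((hφm.comp measurable_sub).mul (hum.comp measurable_snd)).stronglyMeasurable
    exact hprod.integral_prod_right'
  -- pointwise bound on conv
  have hC : ∀ x, ENNReal.ofReal |conv φ u x| ≤ ∫⁻ y, Φe (x - y) * U y := by
    intro x
    calc ENNReal.ofReal |conv φ u x| = (‖conv φ u x‖₊ : ℝ≥0∞) := habs _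
    _ ≤ ∫⁻ y, (‖φ (x - y) * u y‖₊ : ℝ≥0∞) := enorm_integral_le_lintegral_enorm _
    _ = ∫⁻ y, Φe (x - y) * U y := by
        simp_rw [nnnorm_mul, ENNReal.coe_mul, hΦdef, hUdef, habs]
  -- Hölder pointwise
  have hHold : ∀ x, (∫⁻ y, Φe (x - y) * U y) ^ p
      ≤ T ^ (p - 1) * ∫⁻ y, Φe (x - y) * U y ^ p := by
    intro x
    have := holder_aux (μ := (volume : Measure (Euc N))) hp (fun y => Φe (x - y)) U
      ((hΦem.comp (measurable_const.sub measurable_id)).aemeasurable) hUm.aemeasurable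
    rwa [lint_sub_left Φe x] at this
  set L := ∫⁻ x, R x * ENNReal.ofReal |conv φ u x| ^ p with hLdef
  have hT1fin : T ^ (p - 1) ≠ ∞ := ENNReal.rpow_ne_top_of_nonneg (by linarith) hTfin
  have hLle : L ≤ ENNReal.ofReal K * T ^ p * M := by
    have swapmeas : AEMeasurable
        (Function.uncurry fun x y => R x * (Φe (x - y) * U y ^ p))
        ((volume : Measure (Euc N)).prod volume) := by
      apply Measurable.aemeasurable
      apply Measurable.mul
      · exact hRm.comp measurable_fst
      · exact ((hΦem.comp measurable_sub).mul ((hUm.comp measurable_snd).pow_const p))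
    calc L ≤ ∫⁻ x, R x * (T ^ (p-1) * ∫⁻ y, Φe (x - y) * U y ^ p) := by
          apply lintegral_mono; intro x
          exact mul_le_mul_right
            (le_trans (ENNReal.rpow_le_rpow (hC x) hp0.le) (hHold x)) _
    _ = T^(p-1) * ∫⁻ x, ∫⁻ y, R x * (Φe (x - y) * U y ^ p) := by
          rw [← lintegral_const_mul' _ _ hT1fin]
          apply lintegral_congr
          intro x
          rw [lintegral_const_mul' (R x) _ (hRtop x)]
          ring
    _ = T^(p-1) * ∫⁻ y, ∫⁻ x, R x * (Φe (x - y) * U y ^ p) := by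
          rw [lintegral_lintegral_swap swapmeas]
    _ ≤ T^(p-1) * ∫⁻ y, (ENNReal.ofReal K * R y * T) * U y ^ p := by
          apply mul_le_mul_right
          apply lintegral_mono
          intro y
          calc ∫⁻ x, R x * (Φe (x - y) * U y ^ p)
              = (∫⁻ x, R x * Φe (x - y)) * U y ^ p := by
                rw [← lintegral_mul_const' (U y ^ p) _
                  (ENNReal.rpow_ne_top_of_nonneg hp0.le (hUtop y))]
                apply lintegral_congr; intro x; ring
          _ ≤ (∫⁻ x, (ENNReal.ofReal K * R y) * Φe (x - y)) * U y ^ p := by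
                apply mul_le_mul_left
                apply lintegral_mono
                intro x
                by_cases hxy : ‖x - y‖ ≤ 1
                · apply mul_le_mul_left
                  calc R x ≤ ENNReal.ofReal (K * ρ y) :=
                        ENNReal.ofReal_le_ofReal (hKρ y x hxy)
                  _ = ENNReal.ofReal K * R y := ENNReal.ofReal_mul hK.le
                · have : φ (x - y) = 0 := hφsupp _ (not_le.mp hxy)
                  simp [hΦdef, this]
          _ = (ENNReal.ofReal K * R y * T) * U y ^ p := by
                rw [lintegral_const_mul' _ _
                  (ENNReal.mul_ne_top ENNReal.ofReal_ne_top (hRtop y)),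
                  lintegral_sub_right_eq_self Φe y]
    _ = ENNReal.ofReal K * T ^ p * M := by
          have e : ∀ y : Euc N, (ENNReal.ofReal K * R y * T) * U y ^ p
              = (ENNReal.ofReal K * T) * (R y * U y ^ p) := fun y => by ring
          simp_rw [e]
          rw [lintegral_const_mul' _ _ (ENNReal.mul_ne_top ENNReal.ofReal_ne_top hTfin),
            ← hMdef]
          have hTp : T ^ p = T ^ (p-1) * T := by
            nth_rewrite 3 [← ENNReal.rpow_one T]
            rw [← ENNReal.rpow_add_of_nonneg _ _ (by linarith) zero_le_one, sub_add_cancel]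
          rw [hTp]; ring
  have hRHSfin : ENNReal.ofReal K * T ^ p * M ≠ ∞ :=
    ENNReal.mul_ne_top (ENNReal.mul_ne_top ENNReal.ofReal_ne_top
      (ENNReal.rpow_ne_top_of_nonneg hp0.le hTfin)) hMfin
  -- convert
  have hconvint : ∫ x, ρ x * |conv φ u x| ^ p = L.toReal := by
    rw [integral_eq_lintegral_of_nonneg_ae
      (ae_of_all _ fun x =>
        mul_nonneg (hρpos x).le (Real.rpow_nonneg (abs_nonneg _) p))
      ((hρc.aestronglyMeasurable.mul
        ((hconvsm.measurable.abs.pow_const p).aestronglyMeasurable)))]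
    simp_rw [hMrepr (conv φ u)]
    rfl
  have h1 : L.toReal ≤ K * T.toReal ^ p * M.toReal := by
    have := ENNReal.toReal_mono hRHSfin hLle
    rwa [ENNReal.toReal_mul, ENNReal.toReal_mul, ENNReal.toReal_ofReal hK.le,
      ← ENNReal.toReal_rpow] at this
  rw [wnorm, wnorm, hconvint, hMtoReal, hTtoReal]
  calc L.toReal ^ (1/p) ≤ (K * T.toReal ^ p * M.toReal) ^ (1/p) :=
        Real.rpow_le_rpow ENNReal.toReal_nonneg h1 (by positivity)
  _ = K ^ (1/p) * T.toReal * M.toReal ^ (1/p) := by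
      rw [Real.mul_rpow (by positivity) ENNReal.toReal_nonneg,
        Real.mul_rpow hK.le (by positivity),
        ← Real.rpow_mul ENNReal.toReal_nonneg, mul_one_div, div_self hpne, Real.rpow_one]
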